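/- arXiv:2002.06245 — 5 statements merged into one kernel-verified Lean document; each statement's English description precedes it below -/
import Mathlib

section
/- For every real x and y, the sequence n ↦ L_n(x/n, y) / y^n converges, as n → ∞, to Σ_{s=0}^∞ (-1)^s (x/y)^s / (s!)^2, i.e., to J_0(2√(x/y)) expressed as a power series, provided y ≠ 0. -/
/-- Two-variable Laguerre polynomial. -/
noncomputable def laguerre2 (n : ℕ) (x y : ℝ) : ℝ :=
  ∑ s ∈ Finset.range (n + 1),
    (n.choose s : ℝ) * (-1) ^ s * y ^ (n - s) * x ^ s / (Nat.factorial s : ℝ)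

open Filter Finset

noncomputable def lagF (x y : ℝ) (n s : ℕ) : ℝ :=
  (-1) ^ s * (x / y) ^ s / ((Nat.factorial s : ℝ)) ^ 2 *
    ((Nat.descFactorial n s : ℝ) / (n : ℝ) ^ s)

lemma lag_ratio_nonneg (n s : ℕ) : (0:ℝ) ≤ (Nat.descFactorial n s : ℝ) / (n : ℝ) ^ s := by
  positivity

lemma lag_ratio_le_one (n s : ℕ) : (Nat.descFactorial n s : ℝ) / (n : ℝ) ^ s ≤ 1 := by
  rcases eq_or_ne n 0 with rfl | hn
  · cases s with
    | zero => norm_num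
    | succ t => simp [Nat.descFactorial_eq_zero_iff_lt.mpr (Nat.succ_pos t)]
  · have hpos : (0:ℝ) < (n : ℝ) ^ s := by
      have : (0:ℝ) < (n:ℝ) := by exact_mod_cast Nat.pos_of_ne_zero hn
      positivity
    rw [div_le_one hpos]
    exact_mod_cast Nat.descFactorial_le_pow n s

lemma lag_ratio_tendsto (s : ℕ) :
    Tendsto (fun n : ℕ => (Nat.descFactorial n s : ℝ) / (n : ℝ) ^ s) atTop (nhds 1) := by
  have key : (fun n : ℕ => (Nat.descFactorial n s : ℝ) / (n : ℝ) ^ s)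
      =ᶠ[atTop] (fun n : ℕ => ∏ i ∈ range s, (1 - (i : ℝ) / n)) := by
    filter_upwards [eventually_ge_atTop s, eventually_ge_atTop 1] with n hn hn1
    have hn0 : (n : ℝ) ≠ 0 := by positivity
    rw [Nat.descFactorial_eq_prod_range]
    push_cast
    rw [show ((n:ℝ) ^ s) = ∏ _i ∈ range s, (n:ℝ) by simp, ← Finset.prod_div_distrib]
    refine Finset.prod_congr rfl fun i hi => ?_
    rw [Nat.cast_sub (le_trans (mem_range.mp hi).le hn)]
    field_simp
  refine Tendsto.congr' key.symm ?_
  have : Tendsto (fun n : ℕ => ∏ i ∈ range s, (1 - (i : ℝ) / n)) atTop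
      (nhds (∏ i ∈ range s, (1:ℝ))) := by
    refine tendsto_finset_prod _ fun i _ => ?_
    simpa using tendsto_const_nhds.sub (tendsto_const_div_atTop_nhds_zero_nat (i:ℝ))
  simpa using this

lemma lag_eq_tsum (x y : ℝ) (hy : y ≠ 0) {n : ℕ} (hn : 1 ≤ n) :
    laguerre2 n (x / n) y / y ^ n = ∑' s : ℕ, lagF x y n s := by
  have hzero : ∀ s ∉ range (n + 1), lagF x y n s = 0 := by
    intro s hs
    rw [mem_range, not_lt] at hs
    have : Nat.descFactorial n s = 0 := Nat.descFactorial_eq_zero_iff_lt.mpr hs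
    simp [lagF, this]
  rw [tsum_eq_sum hzero, laguerre2, Finset.sum_div]
  refine Finset.sum_congr rfl fun s hs => ?_
  rw [mem_range, Nat.lt_succ_iff] at hs
  have hn0 : (n : ℝ) ≠ 0 := by positivity
  have hs0 : ((Nat.factorial s : ℝ)) ≠ 0 := by positivity
  have hdesc : (Nat.descFactorial n s : ℝ) = (Nat.factorial s : ℝ) * (n.choose s : ℝ) := by
    exact_mod_cast congrArg Nat.cast (Nat.descFactorial_eq_factorial_mul_choose n s)
  rw [lagF, hdesc, pow_sub₀ y hy hs]
  field_simp
  have e1 : (n:ℝ) ^ s * (n:ℝ)⁻¹ ^ s = 1 := by rw [← mul_pow, mul_inv_cancel₀ hn0, one_pow]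
  have e2 : y ^ s * y⁻¹ ^ s = 1 := by rw [← mul_pow, mul_inv_cancel₀ hy, one_pow]
  linear_combination ((n.choose s : ℝ) * x ^ s) * (e1 - e2)

theorem stmt1 (x y : ℝ) (hy : y ≠ 0) :
    Filter.Tendsto (fun n : ℕ => laguerre2 n (x / n) y / y ^ n) Filter.atTop
      (nhds (∑' s : ℕ, (-1) ^ s * (x / y) ^ s / ((Nat.factorial s : ℝ)) ^ 2)) := by
  have hsum : Summable (fun s : ℕ => |x / y| ^ s / (Nat.factorial s : ℝ)) :=
    Real.summable_pow_div_factorial _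
  have hbound : Summable (fun s : ℕ => |x / y| ^ s / ((Nat.factorial s : ℝ)) ^ 2) := by
    refine Summable.of_nonneg_of_le (fun s => by positivity) (fun s => ?_) hsum
    have h0 : (0:ℝ) < (Nat.factorial s : ℝ) := by exact_mod_cast Nat.factorial_pos s
    have h1 : (1:ℝ) ≤ (Nat.factorial s : ℝ) := Nat.one_le_cast.mpr (Nat.factorial_pos s)
    have h2 : (Nat.factorial s : ℝ) ≤ ((Nat.factorial s : ℝ)) ^ 2 := by nlinarith
    exact div_le_div_of_nonneg_left (by positivity) h0 h2
  have main : Tendsto (fun n : ℕ => ∑' s : ℕ, lagF x y n s) atTop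
      (nhds (∑' s : ℕ, (-1) ^ s * (x / y) ^ s / ((Nat.factorial s : ℝ)) ^ 2)) := by
    refine tendsto_tsum_of_dominated_convergence hbound (fun s => ?_) ?_
    · have := (lag_ratio_tendsto s).const_mul ((-1) ^ s * (x / y) ^ s / ((Nat.factorial s : ℝ)) ^ 2)
      simpa [lagF, mul_comm] using this
    · refine Eventually.of_forall fun n => fun s => ?_
      rw [lagF]
      have h1 : ‖(-1) ^ s * (x / y) ^ s / ((Nat.factorial s : ℝ)) ^ 2 *
          ((Nat.descFactorial n s : ℝ) / (n : ℝ) ^ s)‖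
          = |x / y| ^ s / ((Nat.factorial s : ℝ)) ^ 2 *
            ((Nat.descFactorial n s : ℝ) / (n : ℝ) ^ s) := by
        simp only [Real.norm_eq_abs, abs_mul, abs_div, abs_pow, abs_neg, abs_one, one_pow,
          one_mul, Nat.abs_cast]
      rw [h1]
      calc |x / y| ^ s / (Nat.factorial s : ℝ) ^ 2 * ((Nat.descFactorial n s : ℝ) / (n : ℝ) ^ s)
          ≤ |x / y| ^ s / (Nat.factorial s : ℝ) ^ 2 * 1 := by
            have := lag_ratio_le_one n s
            gcongr
        _ = |x / y| ^ s / (Nat.factorial s : ℝ) ^ 2 := mul_one _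
  refine Tendsto.congr' ?_ main
  filter_upwards [eventually_ge_atTop 1] with n hn
  exact (lag_eq_tsum x y hy hn).symm
end

section
/- For all real x, y, the exponential generating function of two-variable Hermite polynomials holds: Σ_{n=0}^∞ (t^n/n!) H_n(x,y) = exp(x t + y t²) for every real t, with the series converging absolutely. -/
/-- Two-variable Hermite (Kampé de Fériet) polynomial. -/
noncomputable def hermite2 (n : ℕ) (x y : ℝ) : ℝ :=
  (Nat.factorial n : ℝ) * ∑ r ∈ Finset.range (n / 2 + 1),
    x ^ (n - 2 * r) * y ^ r / ((Nat.factorial (n - 2 * r) : ℝ) * (Nat.factorial r : ℝ))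

/-- Reindexing: pairs `(k, r)` correspond to `(n, r)` with `n = k + 2r`, `r ≤ n/2`. -/
def hermiteEquiv : (Σ n : ℕ, Fin (n / 2 + 1)) ≃ ℕ × ℕ where
  toFun p := (p.1 - 2 * p.2.1, p.2.1)
  invFun q := ⟨q.1 + 2 * q.2, ⟨q.2, by omega⟩⟩
  left_inv p := by
    obtain ⟨n, r, hr⟩ := p
    have h2 : 2 * r ≤ n := by omega
    refine Sigma.ext (by simp; omega) ?_
    rw [Fin.heq_ext_iff (by simp; omega)]
  right_inv q := by
    obtain ⟨k, r⟩ := q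
    simp
theorem stmt5 (x y t : ℝ) :
    HasSum (fun n : ℕ => t ^ n / (Nat.factorial n : ℝ) * hermite2 n x y)
      (Real.exp (x * t + y * t ^ 2)) := by
  have hx := NormedSpace.expSeries_div_hasSum_exp (x * t)
  have hy := NormedSpace.expSeries_div_hasSum_exp (y * t ^ 2)
  rw [← Real.exp_eq_exp_ℝ] at hx hy
  have hsx : Summable fun k : ℕ => ‖(x * t) ^ k / (Nat.factorial k : ℝ)‖ := by
    simpa only [Real.norm_eq_abs, abs_div, abs_pow, Nat.abs_cast] using Real.summable_pow_div_factorial |x * t|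
  have hsy : Summable fun k : ℕ => ‖(y * t ^ 2) ^ k / (Nat.factorial k : ℝ)‖ := by
    simpa only [Real.norm_eq_abs, abs_div, abs_pow, Nat.abs_cast] using Real.summable_pow_div_factorial |y * t ^ 2|
  have hprod : HasSum
      (fun p : ℕ × ℕ => (x * t) ^ p.1 / (Nat.factorial p.1 : ℝ) *
        ((y * t ^ 2) ^ p.2 / (Nat.factorial p.2 : ℝ)))
      (Real.exp (x * t + y * t ^ 2)) := by
    have hs := summable_mul_of_summable_norm hsx hsy
    have h2 := hx.mul hy hs
    rw [Real.exp_add]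
    exact h2
  have hsig := hermiteEquiv.hasSum_iff.mpr hprod
  refine HasSum.sigma hsig fun n => ?_
  have hfin := hasSum_fintype
    (fun r : Fin (n / 2 + 1) =>
      (x * t) ^ (n - 2 * (r : ℕ)) / (Nat.factorial (n - 2 * (r : ℕ)) : ℝ) *
        ((y * t ^ 2) ^ (r : ℕ) / (Nat.factorial (r : ℕ) : ℝ)))
  convert hfin using 1
  · rfl
  rw [Fin.sum_univ_eq_sum_range
    (fun r => (x * t) ^ (n - 2 * r) / (Nat.factorial (n - 2 * r) : ℝ) *
      ((y * t ^ 2) ^ r / (Nat.factorial r : ℝ)))]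
  rw [hermite2, ← mul_assoc, div_mul_cancel₀ _ (by positivity : (Nat.factorial n : ℝ) ≠ 0),
    Finset.mul_sum]
  refine Finset.sum_congr rfl fun r hr => ?_
  have h2 : 2 * r ≤ n := by
    simp only [Finset.mem_range] at hr; omega
  rw [mul_pow, mul_pow, ← pow_mul]
  have ht : t ^ n = t ^ (n - 2 * r) * t ^ (2 * r) := by
    rw [← pow_add]; congr 1; omega
  rw [ht]
  field_simp
end

section
/- For all real x, y with 4yt < 1 and t ≥ 0 small enough for convergence, Σ_{n=0}^∞ (t^n/n!) H_{2n}(x, y) = (1 - 4yt)^{-1/2} · exp(t x² / (1 - 4yt)). -/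
open Finset

/-- `B k r = (k+1/2)_r / r!`. -/
noncomputable def B (k : ℕ) : ℕ → ℝ
  | 0 => 1
  | r+1 => B k r * ((k : ℝ) + 1/2 + r) / (r+1)

lemma B_pos (k r : ℕ) : 0 < B k r := by
  induction r with
  | zero => norm_num [B]
  | succ r ih =>
    have h1 : (0:ℝ) < (k : ℝ) + 1/2 + r := by positivity
    have h2 : (0:ℝ) < (r:ℝ) + 1 := by positivity
    exact div_pos (mul_pos ih h1) h2

lemma B_succ_left (k r : ℕ) : ((k:ℝ) + 1/2) * B (k+1) r = B k r * ((k:ℝ) + 1/2 + r) := by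
  induction r with
  | zero => simp [B]
  | succ r ih =>
    have h2 : ((r:ℝ) + 1) ≠ 0 := by positivity
    simp only [B]
    push_cast
    have h2 : ((r:ℝ) + 1) ≠ 0 := by positivity
    linear_combination ih * (((k:ℝ) + 1/2 + r + 1) / ((r:ℝ)+1))

lemma sum_B (k r : ℕ) : ∑ i ∈ range (r+1), B k i = B (k+1) r := by
  induction r with
  | zero => simp [B]
  | succ r ih =>
    rw [Finset.sum_range_succ, ih]
    have h2 : ((r:ℝ) + 1) ≠ 0 := by positivity
    have h3 := B_succ_left k r
    simp only [B]
    push_cast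
    field_simp
    linear_combination -2 * h3

open Filter in
lemma summable_B (k : ℕ) {u : ℝ} (hu : |u| < 1) : Summable fun r : ℕ => B k r * u ^ r := by
  rcases eq_or_ne u 0 with rfl | hu0
  · apply summable_of_ne_finset_zero (s := {0})
    intro r hr
    simp only [Finset.mem_singleton] at hr
    simp [zero_pow hr]
  · apply summable_of_ratio_test_tendsto_lt_one hu ?_ ?_
    · filter_upwards with r
      exact mul_ne_zero (B_pos k r).ne' (pow_ne_zero _ hu0)
    · have key : (fun n : ℕ => ‖B k (n+1) * u ^ (n+1)‖ / ‖B k n * u ^ n‖)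
          = fun n : ℕ => (((k:ℝ) - 1/2) / ((n:ℝ) + 1) + 1) * |u| := by
        funext n
        have hB := B_pos k n
        have hB' := B_pos k (n+1)
        have hun : |u| ^ n ≠ 0 := pow_ne_zero _ (abs_ne_zero.mpr hu0)
        rw [norm_mul, norm_mul, norm_pow, norm_pow, Real.norm_eq_abs,
          Real.norm_eq_abs, Real.norm_eq_abs, abs_of_pos hB, abs_of_pos hB']
        show B k n * ((k:ℝ) + 1/2 + n) / (n+1) * |u| ^ (n+1) / (B k n * |u| ^ n) = _
        have h1 : ((n:ℝ) + 1) ≠ 0 := by positivity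
        field_simp
        ring
      rw [key]
      have h0 : Tendsto (fun n : ℕ => ((k:ℝ) - 1/2) / ((n:ℝ) + 1)) atTop (nhds 0) := by
        have := (tendsto_const_div_atTop_nhds_zero_nat ((k:ℝ) - 1/2)).comp
          (tendsto_add_atTop_nat 1)
        simpa [Function.comp_def] using this
      have h1 := (h0.add_const 1).mul_const |u|
      simpa using h1

lemma B_eq (k r : ℕ) :
    B k r = ((2*(k+r)).factorial : ℝ) * k.factorial /
      ((k+r).factorial * (2*k).factorial * r.factorial * 4 ^ r) := by
  induction r with
  | zero =>
    have h1 : ((k.factorial : ℝ)) ≠ 0 := Nat.cast_ne_zero.mpr k.factorial_ne_zero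
    have h2 : (((2*k).factorial : ℝ)) ≠ 0 := Nat.cast_ne_zero.mpr (2*k).factorial_ne_zero
    simp [B]
    field_simp
  | succ r ih =>
    have e1 : 2*(k+(r+1)) = (2*(k+r)+1)+1 := by ring
    have e2 : k+(r+1) = (k+r)+1 := by ring
    rw [B, ih, e1, e2, Nat.factorial_succ, Nat.factorial_succ, Nat.factorial_succ,
      Nat.factorial_succ]
    have h1 : ((k+r).factorial : ℝ) ≠ 0 := Nat.cast_ne_zero.mpr (k+r).factorial_ne_zero
    have h2 : (((2*k).factorial : ℝ)) ≠ 0 := Nat.cast_ne_zero.mpr (2*k).factorial_ne_zero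
    have h3 : ((r.factorial : ℝ)) ≠ 0 := Nat.cast_ne_zero.mpr r.factorial_ne_zero
    have h4 : ((2*(k+r)).factorial : ℝ) ≠ 0 := Nat.cast_ne_zero.mpr (2*(k+r)).factorial_ne_zero
    have h5 : ((r:ℝ) + 1) ≠ 0 := by positivity
    have h6 : ((k:ℝ) + r + 1) ≠ 0 := by positivity
    have h7 : (4:ℝ) ^ r ≠ 0 := by positivity
    push_cast
    field_simp
    ring

lemma descPoch_smeval_succ (n : ℕ) (x : ℝ) :
    (descPochhammer ℤ (n+1)).smeval x = (descPochhammer ℤ n).smeval x * (x - n) := by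
  rw [descPochhammer_succ_right, Polynomial.smeval_mul, Polynomial.smeval_sub,
    Polynomial.smeval_X, Polynomial.smeval_natCast]
  simp

lemma descPoch_neg_half (n : ℕ) :
    (descPochhammer ℤ n).smeval (-(1/2) : ℝ) = (-1)^n * B 0 n * n.factorial := by
  induction n with
  | zero => simp [B, descPochhammer]
  | succ n ih =>
    rw [descPoch_smeval_succ, ih, Nat.factorial_succ, B]
    have h1 : ((n:ℝ) + 1) ≠ 0 := by positivity
    push_cast
    field_simp
    ring

lemma descPoch_neg_one (n : ℕ) :
    (descPochhammer ℤ n).smeval (-1 : ℝ) = (-1)^n * n.factorial := by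
  induction n with
  | zero => simp [descPochhammer]
  | succ n ih =>
    rw [descPoch_smeval_succ, ih, Nat.factorial_succ]
    push_cast
    ring

lemma choose_neg_half (n : ℕ) : Ring.choose (-(1/2) : ℝ) n = (-1)^n * B 0 n := by
  have h := (Ring.descPochhammer_eq_factorial_smul_choose (-(1/2) : ℝ) n).symm
  have hn : ((n.factorial : ℝ)) ≠ 0 := Nat.cast_ne_zero.mpr n.factorial_ne_zero
  refine mul_left_cancel₀ hn ?_
  rw [← nsmul_eq_mul, h, descPoch_neg_half]
  ring

lemma choose_neg_one (n : ℕ) : Ring.choose (-1 : ℝ) n = (-1)^n := by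
  have h := (Ring.descPochhammer_eq_factorial_smul_choose (-1 : ℝ) n).symm
  have hn : ((n.factorial : ℝ)) ≠ 0 := Nat.cast_ne_zero.mpr n.factorial_ne_zero
  refine mul_left_cancel₀ hn ?_
  rw [← nsmul_eq_mul, h, descPoch_neg_one]
  ring

lemma conv_B (n : ℕ) : ∑ ij ∈ Finset.HasAntidiagonal.antidiagonal n, B 0 ij.1 * B 0 ij.2 = 1 := by
  have h := Ring.add_choose_eq (r := (-(1/2) : ℝ)) (s := (-(1/2) : ℝ)) n (Commute.all _ _)
  have e : (-(1/2) : ℝ) + (-(1/2)) = -1 := by norm_num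
  rw [e, choose_neg_one] at h
  have h2 : ∀ ij ∈ Finset.HasAntidiagonal.antidiagonal n,
      Ring.choose (-(1/2) : ℝ) ij.1 * Ring.choose (-(1/2) : ℝ) ij.2
        = (-1)^n * (B 0 ij.1 * B 0 ij.2) := by
    intro ij hij
    rw [choose_neg_half, choose_neg_half]
    have : ij.1 + ij.2 = n := Finset.HasAntidiagonal.mem_antidiagonal.mp hij
    rw [← this, pow_add]
    ring
  rw [Finset.sum_congr rfl h2, ← Finset.mul_sum] at h
  have hpow : ((-1:ℝ))^n ≠ 0 := pow_ne_zero _ (by norm_num)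
  have h3 : ((-1:ℝ))^n * ∑ ij ∈ Finset.HasAntidiagonal.antidiagonal n, B 0 ij.1 * B 0 ij.2 = (-1:ℝ)^n * 1 := by
    rw [mul_one, ← h]
  exact mul_left_cancel₀ hpow h3

lemma summable_norm_B (k : ℕ) {u : ℝ} (hu : |u| < 1) :
    Summable fun r : ℕ => ‖B k r * u ^ r‖ := by
  have h : (fun r : ℕ => ‖B k r * u ^ r‖) = fun r : ℕ => B k r * |u| ^ r := by
    funext r
    rw [norm_mul, norm_pow, Real.norm_eq_abs, Real.norm_eq_abs, abs_of_pos (B_pos k r)]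
  rw [h]
  exact summable_B k (by rwa [abs_abs])

lemma tsum_B_sq {u : ℝ} (hu : |u| < 1) :
    (∑' r : ℕ, B 0 r * u ^ r) * (∑' r : ℕ, B 0 r * u ^ r) = (1 - u)⁻¹ := by
  rw [tsum_mul_tsum_eq_tsum_sum_antidiagonal_of_summable_norm
    (summable_norm_B 0 hu) (summable_norm_B 0 hu)]
  have h : ∀ n : ℕ, ∑ kl ∈ Finset.HasAntidiagonal.antidiagonal n, (B 0 kl.1 * u ^ kl.1) * (B 0 kl.2 * u ^ kl.2)
      = u ^ n := by
    intro n
    have : ∀ kl ∈ Finset.HasAntidiagonal.antidiagonal n,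
        (B 0 kl.1 * u ^ kl.1) * (B 0 kl.2 * u ^ kl.2) = (B 0 kl.1 * B 0 kl.2) * u ^ n := by
      intro kl hkl
      rw [← Finset.HasAntidiagonal.mem_antidiagonal.mp hkl, pow_add]
      ring
    rw [Finset.sum_congr rfl this, ← Finset.sum_mul, conv_B, one_mul]
  rw [tsum_congr h]
  exact tsum_geometric_of_norm_lt_one (by rwa [Real.norm_eq_abs])

noncomputable def Fc (a : ℝ) (v : ℝ) : ℝ := ∑' r : ℕ, B 0 r * (max (-a) (min a v)) ^ r

lemma clamp_abs_le {a v : ℝ} (ha : 0 ≤ a) : |max (-a) (min a v)| ≤ a := by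
  rw [abs_le]
  constructor
  · exact le_max_left _ _
  · exact max_le (by linarith) (min_le_left _ _)

lemma clamp_eq {a v : ℝ} (hv : |v| ≤ a) : max (-a) (min a v) = v := by
  rw [abs_le] at hv
  rw [min_eq_right hv.2, max_eq_right hv.1]

lemma Fc_continuous {a : ℝ} (ha0 : 0 ≤ a) (ha : a < 1) : Continuous (Fc a) := by
  apply continuous_tsum (u := fun r : ℕ => B 0 r * a ^ r)
  · intro r
    fun_prop
  · exact summable_B 0 (by rwa [abs_of_nonneg ha0])
  · intro r v
    rw [norm_mul, norm_pow, Real.norm_eq_abs, Real.norm_eq_abs, abs_of_pos (B_pos 0 r)]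
    have hcl := clamp_abs_le (a := a) (v := v) ha0
    exact mul_le_mul_of_nonneg_left (pow_le_pow_left₀ (abs_nonneg _) hcl r) (B_pos 0 r).le

lemma Fc_eq {a v : ℝ} (hv : |v| ≤ a) : Fc a v = ∑' r : ℕ, B 0 r * v ^ r := by
  unfold Fc
  rw [clamp_eq hv]

lemma hasSum_B_zero {u : ℝ} (hu : |u| < 1) :
    HasSum (fun r : ℕ => B 0 r * u ^ r) ((1 - u) ^ (-(1/2) : ℝ)) := by
  set a := |u| with ha_def
  have ha0 : 0 ≤ a := abs_nonneg u
  have ha : a < 1 := hu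
  set h : ℝ → ℝ := fun v => Fc a v * Real.sqrt (1 - v) with hh_def
  have hcont : Continuous h := (Fc_continuous ha0 ha).mul (by fun_prop)
  have hsq : ∀ v : ℝ, |v| ≤ a → h v ^ 2 = 1 := by
    intro v hv
    have hv1 : |v| < 1 := lt_of_le_of_lt hv ha
    have h1v : 0 < 1 - v := by
      have := abs_lt.mp hv1
      linarith [this.2]
    simp only [hh_def]
    rw [mul_pow, Real.sq_sqrt h1v.le, Fc_eq hv, sq, tsum_B_sq hv1]
    field_simp
  have h0 : h 0 = 1 := by
    simp only [hh_def]
    rw [Fc_eq (by simpa using ha0)]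
    have : ∑' r : ℕ, B 0 r * (0:ℝ) ^ r = 1 := by
      rw [tsum_eq_single 0 (by intro r hr; simp [zero_pow hr])]
      simp [B]
    rw [this]
    simp
  have hmem : ∀ v ∈ Set.uIcc (0:ℝ) u, |v| ≤ a := by
    intro v hv
    rcases le_total 0 u with hc | hc
    · rw [Set.uIcc_of_le hc] at hv
      rw [abs_le]
      constructor
      · linarith [hv.1, ha0, abs_nonneg u]
      · calc v ≤ u := hv.2
          _ ≤ |u| := le_abs_self u
    · rw [Set.uIcc_of_ge hc] at hv
      rw [abs_le]
      constructor
      · calc -a = -|u| := rfl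
          _ ≤ u := neg_abs_le u
          _ ≤ v := hv.1
      · linarith [hv.2, ha0]
  have hu_sq : h u ^ 2 = 1 := hsq u (le_refl _)
  have hukey : h u = 1 := by
    by_contra hne
    have hfac : (h u - 1) * (h u + 1) = 0 := by linear_combination hu_sq
    have hum : h u = -1 := by
      rcases mul_eq_zero.mp hfac with h1 | h1
      · exact absurd (by linarith : h u = 1) hne
      · linarith
    have h0mem : (0:ℝ) ∈ Set.uIcc (h 0) (h u) := by
      rw [h0, hum]
      rw [Set.uIcc_of_ge (by norm_num : (-1:ℝ) ≤ 1)]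
      norm_num
    obtain ⟨c, hc, hc0⟩ := intermediate_value_uIcc hcont.continuousOn h0mem
    have := hsq c (hmem c hc)
    rw [hc0] at this
    norm_num at this
  have h1u : 0 < 1 - u := by
    have := abs_lt.mp hu
    linarith [this.2]
  have hs : Real.sqrt (1 - u) ≠ 0 := ne_of_gt (Real.sqrt_pos.mpr h1u)
  have hFu : Fc a u = (Real.sqrt (1 - u))⁻¹ := by
    have : Fc a u * Real.sqrt (1 - u) = 1 := hukey
    field_simp at this ⊢
    linarith
  rw [(summable_B 0 hu).hasSum_iff]
  rw [← Fc_eq (le_refl a), hFu, Real.rpow_neg h1u.le, Real.sqrt_eq_rpow]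

lemma hasSum_B (k : ℕ) {u : ℝ} (hu : |u| < 1) :
    HasSum (fun r : ℕ => B k r * u ^ r) ((1 - u) ^ (-(1/2) : ℝ) * ((1 - u)⁻¹) ^ k) := by
  induction k with
  | zero => simpa using hasSum_B_zero hu
  | succ k ih =>
    have hnorm : ‖u‖ < 1 := by rwa [Real.norm_eq_abs]
    have hgeom_norm : Summable fun n : ℕ => ‖u ^ n‖ := by
      simp only [norm_pow]
      exact summable_geometric_of_norm_lt_one (by rwa [Real.norm_eq_abs, abs_norm])
    have key := tsum_mul_tsum_eq_tsum_sum_antidiagonal_of_summable_norm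
      (summable_norm_B k hu) hgeom_norm
    have e3 : ∀ n : ℕ, ∑ kl ∈ Finset.HasAntidiagonal.antidiagonal n, (B k kl.1 * u ^ kl.1) * u ^ kl.2
        = B (k+1) n * u ^ n := by
      intro n
      rw [Finset.Nat.sum_antidiagonal_eq_sum_range_succ_mk]
      have : ∀ i ∈ Finset.range (n+1), (B k i * u ^ i) * u ^ (n - i) = B k i * u ^ n := by
        intro i hi
        have hin : i ≤ n := Nat.lt_succ_iff.mp (Finset.mem_range.mp hi)
        rw [mul_assoc, ← pow_add, Nat.add_sub_cancel' hin]
      rw [Finset.sum_congr rfl this, ← Finset.sum_mul, sum_B]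
    rw [ih.tsum_eq, tsum_geometric_of_norm_lt_one hnorm, tsum_congr e3] at key
    rw [(summable_B (k+1) hu).hasSum_iff, ← key, pow_succ]
    ring

theorem stmt6 (x y t : ℝ) (ht0 : 0 ≤ t) (ht : 4 * |y| * |t| < 1) :
    HasSum (fun n : ℕ => t ^ n / (Nat.factorial n : ℝ) * hermite2 (2 * n) x y)
      ((1 - 4 * y * t) ^ (-(1 / 2 : ℝ)) * Real.exp (t * x ^ 2 / (1 - 4 * y * t))) := by
  have hu : |4 * y * t| < 1 := by
    have e : |4 * y * t| = 4 * |y| * |t| := by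
      rw [abs_mul, abs_mul]
      norm_num
    rw [e]; exact ht
  set u : ℝ := 4 * y * t with hu_def
  have h1u : 0 < 1 - u := by
    have := abs_lt.mp hu
    linarith [this.2]
  have habs : |(|u|)| < 1 := by rwa [abs_abs]
  set f : ℕ × ℕ → ℝ :=
    fun p => (t * x ^ 2) ^ p.1 / (p.1.factorial : ℝ) * (B p.1 p.2 * u ^ p.2) with hf_def
  have htx : 0 ≤ t * x ^ 2 := by positivity
  have hslice : ∀ (k : ℕ) (v : ℝ), |v| < 1 →
      HasSum (fun r : ℕ => (t * x ^ 2) ^ k / (k.factorial : ℝ) * (B k r * v ^ r))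
        ((t * x ^ 2) ^ k / (k.factorial : ℝ) * ((1 - v) ^ (-(1/2) : ℝ) * ((1 - v)⁻¹) ^ k)) :=
    fun k v hv => (hasSum_B k hv).mul_left _
  have hnorm : ∀ p : ℕ × ℕ,
      ‖f p‖ = (t * x ^ 2) ^ p.1 / (p.1.factorial : ℝ) * (B p.1 p.2 * |u| ^ p.2) := by
    intro p
    rw [hf_def]
    simp only
    simp only [norm_mul, norm_div, norm_pow, Real.norm_eq_abs, Nat.abs_cast,
      abs_of_nonneg htx, abs_of_pos (B_pos p.1 p.2)]
    rw [abs_of_nonneg ht0, sq_abs]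
  have hsummable_norm : Summable fun p : ℕ × ℕ => ‖f p‖ := by
    have hpos : 0 ≤ fun p : ℕ × ℕ =>
        (t * x ^ 2) ^ p.1 / (p.1.factorial : ℝ) * (B p.1 p.2 * |u| ^ p.2) := by
      intro p
      have := B_pos p.1 p.2
      positivity
    rw [funext hnorm]
    apply (summable_prod_of_nonneg hpos).mpr
    constructor
    · intro k
      exact (hslice k _ habs).summable
    · have e : ∀ k : ℕ,
          ∑' r : ℕ, (t * x ^ 2) ^ k / (k.factorial : ℝ) * (B k r * |u| ^ r)
            = (1 - |u|) ^ (-(1/2) : ℝ) * ((t * x ^ 2 / (1 - |u|)) ^ k / (k.factorial : ℝ)) := by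
        intro k
        rw [(hslice k _ habs).tsum_eq, div_eq_mul_inv (t * x ^ 2), mul_pow]
        ring
      rw [funext e]
      exact (Real.summable_pow_div_factorial _).mul_left _
  have hsum : Summable f := hsummable_norm.of_norm
  obtain ⟨L, hL⟩ := hsum
  have hfib : ∀ k : ℕ, HasSum (fun r : ℕ => f (k, r))
      ((1 - u) ^ (-(1/2) : ℝ) * ((t * x ^ 2 / (1 - u)) ^ k / (k.factorial : ℝ))) := by
    intro k
    have h := hslice k u hu
    have e : (t * x ^ 2) ^ k / (k.factorial : ℝ) * ((1 - u) ^ (-(1/2) : ℝ) * ((1 - u)⁻¹) ^ k)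
        = (1 - u) ^ (-(1/2) : ℝ) * ((t * x ^ 2 / (1 - u)) ^ k / (k.factorial : ℝ)) := by
      rw [div_eq_mul_inv (t * x ^ 2), mul_pow]
      ring
    rw [e] at h
    exact h
  have hexp : HasSum
      (fun k : ℕ => (1 - u) ^ (-(1/2) : ℝ) * ((t * x ^ 2 / (1 - u)) ^ k / (k.factorial : ℝ)))
      ((1 - u) ^ (-(1/2) : ℝ) * Real.exp (t * x ^ 2 / (1 - u))) := by
    rw [Real.exp_eq_exp_ℝ]
    exact (NormedSpace.expSeries_div_hasSum_exp (t * x ^ 2 / (1 - u) : ℝ)).mul_left _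
  have hLT : L = (1 - u) ^ (-(1/2) : ℝ) * Real.exp (t * x ^ 2 / (1 - u)) :=
    (hL.prod_fiberwise hfib).unique hexp
  rw [hLT] at hL
  have he : HasSum (f ∘ Finset.HasAntidiagonal.sigmaAntidiagonalEquivProd)
      ((1 - u) ^ (-(1/2) : ℝ) * Real.exp (t * x ^ 2 / (1 - u))) :=
    (Equiv.hasSum_iff _).mpr hL
  have hgroup : HasSum (fun n : ℕ => ∑ kl ∈ Finset.HasAntidiagonal.antidiagonal n, f kl)
      ((1 - u) ^ (-(1/2) : ℝ) * Real.exp (t * x ^ 2 / (1 - u))) := by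
    apply he.sigma
    intro n
    have h := hasSum_fintype (fun c : {p // p ∈ Finset.HasAntidiagonal.antidiagonal n} => f c.val)
    rwa [Finset.sum_coe_sort] at h
  have hterm : ∀ n : ℕ,
      ∑ kl ∈ Finset.HasAntidiagonal.antidiagonal n, f kl = t ^ n / (n.factorial : ℝ) * hermite2 (2 * n) x y := by
    intro n
    rw [Finset.Nat.sum_antidiagonal_eq_sum_range_succ_mk, ← Finset.sum_range_reflect]
    rw [hermite2, Nat.mul_div_cancel_left n (by norm_num : 0 < 2)]
    rw [Finset.mul_sum, Finset.mul_sum]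
    apply Finset.sum_congr rfl
    intro r hr
    have hrn : r ≤ n := Nat.lt_succ_iff.mp (Finset.mem_range.mp hr)
    have h1 : n + 1 - 1 - r = n - r := by omega
    have h2 : n - (n - r) = r := Nat.sub_sub_self hrn
    rw [h1, hf_def]
    simp only
    rw [h2, B_eq]
    have h3 : (n - r) + r = n := Nat.sub_add_cancel hrn
    have h4 : 2 * (n - r) = 2 * n - 2 * r := by omega
    rw [h3]
    have e1 : (t * x ^ 2) ^ (n - r) = t ^ (n - r) * x ^ (2 * n - 2 * r) := by
      rw [mul_pow, ← pow_mul, mul_comm (2:ℕ), ← h4, mul_comm (n-r) 2]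
    have e2 : u ^ r = 4 ^ r * y ^ r * t ^ r := by
      rw [hu_def, mul_pow, mul_pow]
    rw [e1, e2]
    have n1 : ((n.factorial : ℝ)) ≠ 0 := Nat.cast_ne_zero.mpr n.factorial_ne_zero
    have n2 : (((2*n).factorial : ℝ)) ≠ 0 := Nat.cast_ne_zero.mpr (2*n).factorial_ne_zero
    have n3 : (((n-r).factorial : ℝ)) ≠ 0 := Nat.cast_ne_zero.mpr (n-r).factorial_ne_zero
    have n4 : ((r.factorial : ℝ)) ≠ 0 := Nat.cast_ne_zero.mpr r.factorial_ne_zero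
    have n5 : (((2*n-2*r).factorial : ℝ)) ≠ 0 := Nat.cast_ne_zero.mpr (2*n-2*r).factorial_ne_zero
    have n6 : (4:ℝ) ^ r ≠ 0 := by positivity
    have e3 : t ^ (n - r) * t ^ r = t ^ n := by rw [← pow_add, h3]
    rw [h4]
    field_simp
    rw [← e3]
    ring
  rw [funext hterm] at hgroup
  exact hgroup
end

section
/- For every real x ≠ 0 and real y, lim_{n→∞} H_n(x, y/n²) / x^n = exp(y/x²). -/
open Filter Finset

private noncomputable def hAux (t : ℝ) (n r : ℕ) : ℝ :=
  (if 2 * r ≤ n then (Nat.descFactorial n (2 * r) : ℝ) / (n : ℝ) ^ (2 * r) else 0)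
    * t ^ r / (Nat.factorial r : ℝ)

private lemma hAux_bound (t : ℝ) (n r : ℕ) :
    ‖hAux t n r‖ ≤ |t| ^ r / (Nat.factorial r : ℝ) := by
  have h1 : |if 2 * r ≤ n then (Nat.descFactorial n (2 * r) : ℝ) / (n : ℝ) ^ (2 * r) else 0| ≤ 1 := by
    split_ifs with h
    · rcases Nat.eq_zero_or_pos n with rfl | hn
      · have hr0 : r = 0 := by omega
        subst hr0; simp
      rw [abs_div, abs_of_nonneg (by positivity), abs_of_nonneg (by positivity),
        div_le_one (by positivity)]
      exact_mod_cast Nat.descFactorial_le_pow n (2 * r)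
    · simp
  have h2 : (0:ℝ) ≤ Nat.factorial r := by positivity
  rw [hAux, Real.norm_eq_abs, abs_div, abs_mul, abs_pow, Nat.abs_cast]
  apply div_le_div_of_nonneg_right ?_ h2 |>.trans_eq rfl
  calc _ ≤ 1 * |t| ^ r := mul_le_mul_of_nonneg_right h1 (by positivity)
    _ = |t| ^ r := one_mul _

private lemma hAux_tendsto (t : ℝ) (r : ℕ) :
    Tendsto (fun n => hAux t n r) atTop (nhds (t ^ r / (Nat.factorial r : ℝ))) := by
  have key : Tendsto (fun n : ℕ => (Nat.descFactorial n (2 * r) : ℝ) / (n : ℝ) ^ (2 * r))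
      atTop (nhds 1) := by
    have hprod : Tendsto (fun n : ℕ => ∏ i ∈ range (2 * r), (1 - (i : ℝ) / n)) atTop
        (nhds (∏ i ∈ range (2 * r), (1:ℝ))) := by
      apply tendsto_finset_prod
      intro i _
      simpa using tendsto_const_nhds.sub (tendsto_const_div_atTop_nhds_zero_nat (i:ℝ))
    simp only [Finset.prod_const_one] at hprod
    apply hprod.congr'
    filter_upwards [eventually_ge_atTop (2 * r + 1)] with n hn
    have hfac : ∀ i ∈ range (2 * r), (1 - (i:ℝ)/n) = ((n - i : ℕ):ℝ)/n := by
      intro i hi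
      have hin : i ≤ n := by simp only [mem_range] at hi; omega
      have hn0 : (n:ℝ) ≠ 0 := Nat.cast_ne_zero.mpr (by omega)
      rw [Nat.cast_sub hin]
      field_simp
    rw [Finset.prod_congr rfl hfac, Finset.prod_div_distrib, Finset.prod_const,
      Finset.card_range, Nat.descFactorial_eq_prod_range, Nat.cast_prod]
  have : Tendsto (fun n : ℕ =>
      (Nat.descFactorial n (2 * r) : ℝ) / (n : ℝ) ^ (2 * r) * t ^ r / (Nat.factorial r : ℝ))
      atTop (nhds (t ^ r / (Nat.factorial r : ℝ))) := by
    simpa using (key.mul_const (t ^ r)).div_const (Nat.factorial r : ℝ)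
  apply this.congr'
  filter_upwards [eventually_ge_atTop (2 * r)] with n hn
  rw [hAux, if_pos hn]

private lemma hermite2_eq_tsum (x y : ℝ) (hx : x ≠ 0) (n : ℕ) (hn : 1 ≤ n) :
    hermite2 n x (y / (n : ℝ) ^ 2) / x ^ n = ∑' r, hAux (y / x ^ 2) n r := by
  have hn0 : (n:ℝ) ≠ 0 := by positivity
  rw [tsum_eq_sum (s := range (n / 2 + 1)) (by
    intro r hr
    have : ¬ (2 * r ≤ n) := by simp only [mem_range] at hr; omega
    rw [hAux, if_neg this, zero_mul, zero_div])]
  rw [hermite2, Finset.mul_sum, Finset.sum_div]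
  apply Finset.sum_congr rfl
  intro r hr
  have h2r : 2 * r ≤ n := by
    simp only [mem_range] at hr; omega
  rw [hAux, if_pos h2r]
  have hfact : (Nat.factorial n : ℝ)
      = (Nat.factorial (n - 2 * r) : ℝ) * (Nat.descFactorial n (2 * r) : ℝ) := by
    exact_mod_cast (Nat.factorial_mul_descFactorial h2r).symm
  have hxp : x ^ (n - 2 * r) = x ^ n / x ^ (2 * r) := pow_sub₀ x hx h2r
  have hf1 : (Nat.factorial (n - 2 * r) : ℝ) ≠ 0 := by positivity
  have hf2 : (Nat.factorial r : ℝ) ≠ 0 := by positivity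
  rw [hfact, hxp, div_pow, div_pow]
  field_simp
  ring

theorem stmt7 (x y : ℝ) (hx : x ≠ 0) :
    Filter.Tendsto (fun n : ℕ => hermite2 n x (y / (n : ℝ) ^ 2) / x ^ n) Filter.atTop
      (nhds (Real.exp (y / x ^ 2))) := by
  set t := y / x ^ 2 with ht
  have hexp : Real.exp t = ∑' r : ℕ, t ^ r / (Nat.factorial r : ℝ) := by
    rw [Real.exp_eq_exp_ℝ, NormedSpace.exp_eq_tsum_div]
  rw [hexp]
  have hmain : Tendsto (fun n : ℕ => ∑' r, hAux t n r) atTop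
      (nhds (∑' r : ℕ, t ^ r / (Nat.factorial r : ℝ))) := by
    apply tendsto_tsum_of_dominated_convergence (bound := fun r => |t| ^ r / (Nat.factorial r : ℝ))
      (Real.summable_pow_div_factorial |t|) (hAux_tendsto t)
    exact Eventually.of_forall fun n r => hAux_bound t n r
  apply hmain.congr'
  filter_upwards [eventually_ge_atTop 1] with n hn
  exact (hermite2_eq_tsum x y hx n hn).symm
end

section
/- For every real x ≠ 0 and y ≥ 0, lim_{n→∞} HL_n(x, y/n²)/x^n = Σ_{r=0}^∞ (y/x²)^r / (r!)², i.e., the modified Bessel value I_0(2√y/|x|)-type series. -/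
/-- Hybrid Laguerre–Hermite polynomials. -/
noncomputable def hybridLH (n : ℕ) (x y : ℝ) : ℝ :=
  (Nat.factorial n : ℝ) * ∑ r ∈ Finset.range (n / 2 + 1),
    x ^ (n - 2 * r) * y ^ r / ((Nat.factorial (n - 2 * r) : ℝ) * (Nat.factorial r : ℝ) ^ 2)

theorem stmt11 (x y : ℝ) (hx : x ≠ 0) (hy : 0 ≤ y) :
    Filter.Tendsto (fun n : ℕ => hybridLH n x (y / (n : ℝ) ^ 2) / x ^ n) Filter.atTop
      (nhds (∑' r : ℕ, (y / x ^ 2) ^ r / (Nat.factorial r : ℝ) ^ 2)) := by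
  set z : ℝ := y / x ^ 2 with hz
  have hz0 : 0 ≤ z := div_nonneg hy (sq_nonneg x)
  set g : ℕ → ℝ := fun r => z ^ r / (Nat.factorial r : ℝ) ^ 2 with hg
  have hg0 : ∀ r, 0 ≤ g r := fun r => div_nonneg (pow_nonneg hz0 r) (sq_nonneg _)
  set f : ℕ → ℕ → ℝ := fun n r =>
    if 2 * r ≤ n then ((n.descFactorial (2 * r) : ℝ) / (n : ℝ) ^ (2 * r)) * g r else 0 with hf
  -- summability of bound
  have hsum : Summable g := by
    apply Summable.of_nonneg_of_le hg0 (fun r => ?_) (Real.summable_pow_div_factorial z)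
    have h1 : (1 : ℝ) ≤ (Nat.factorial r : ℝ) := by
      exact_mod_cast Nat.one_le_iff_ne_zero.mpr r.factorial_ne_zero
    exact div_le_div_of_nonneg_left (pow_nonneg hz0 r) (by positivity) (by nlinarith)
  -- pointwise convergence
  have hpt : ∀ r, Filter.Tendsto (fun n => f n r) Filter.atTop (nhds (g r)) := by
    intro r
    have hprod : Filter.Tendsto
        (fun n : ℕ => (∏ i ∈ Finset.range (2 * r), (1 - (i : ℝ) / n)) * g r)
        Filter.atTop (nhds (g r)) := by
      have h1 : Filter.Tendsto
          (fun n : ℕ => ∏ i ∈ Finset.range (2 * r), (1 - (i : ℝ) / n))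
          Filter.atTop (nhds (∏ i ∈ Finset.range (2 * r), (1 : ℝ))) := by
        apply tendsto_finset_prod
        intro i _
        have := tendsto_const_div_atTop_nhds_zero_nat (i : ℝ)
        have h2 := (tendsto_const_nhds (x := (1:ℝ)) (f := Filter.atTop (α := ℕ))).sub this
        simpa using h2
      simpa using h1.mul_const (g r)
    refine hprod.congr' ?_
    filter_upwards [Filter.eventually_ge_atTop (max (2 * r) 1)] with n hn
    have h2r : 2 * r ≤ n := le_trans (le_max_left _ _) hn
    have hn1 : 1 ≤ n := le_trans (le_max_right _ _) hn
    have hn0 : (n : ℝ) ≠ 0 := by positivity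
    simp only [hf, if_pos h2r]
    congr 1
    rw [Nat.descFactorial_eq_prod_range, Nat.cast_prod]
    rw [show ((n : ℝ) ^ (2 * r)) = ∏ _i ∈ Finset.range (2 * r), (n : ℝ) by
      rw [Finset.prod_const, Finset.card_range]]
    rw [← Finset.prod_div_distrib]
    apply Finset.prod_congr rfl
    intro i hi
    simp only [Finset.mem_range] at hi
    have : (i : ℝ) ≤ (n : ℝ) := by exact_mod_cast le_of_lt (lt_of_lt_of_le hi h2r)
    rw [Nat.cast_sub (le_of_lt (lt_of_lt_of_le hi h2r))]
    field_simp
  -- eventual bound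
  have hbd : ∀ᶠ n in Filter.atTop, ∀ r, ‖f n r‖ ≤ g r := by
    filter_upwards [Filter.eventually_ge_atTop 1] with n hn r
    by_cases h : 2 * r ≤ n
    · simp only [hf, if_pos h]
      rw [Real.norm_eq_abs, abs_of_nonneg (by positivity)]
      have hle : ((n.descFactorial (2 * r) : ℝ) / (n : ℝ) ^ (2 * r)) ≤ 1 := by
        rw [div_le_one (by positivity)]
        exact_mod_cast Nat.descFactorial_le_pow n (2 * r)
      calc ((n.descFactorial (2 * r) : ℝ) / (n : ℝ) ^ (2 * r)) * g r
          ≤ 1 * g r := mul_le_mul_of_nonneg_right hle (hg0 r)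
        _ = g r := one_mul _
    · simp [hf, if_neg h, hg0 r]
  have main := tendsto_tsum_of_dominated_convergence hsum hpt hbd
  refine main.congr' ?_
  filter_upwards [Filter.eventually_ge_atTop 1] with n hn
  have hn0 : (n : ℝ) ≠ 0 := by positivity
  -- tsum equals finite sum
  have hts : ∑' r, f n r = ∑ r ∈ Finset.range (n / 2 + 1), f n r := by
    apply tsum_eq_sum
    intro r hr
    simp only [Finset.mem_range, not_lt] at hr
    have : ¬ 2 * r ≤ n := by omega
    simp [hf, this]
  rw [hts]
  unfold hybridLH
  rw [Finset.mul_sum, Finset.sum_div]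
  apply Finset.sum_congr rfl
  intro r hr
  simp only [Finset.mem_range] at hr
  have h2r : 2 * r ≤ n := by omega
  simp only [hf, if_pos h2r]
  have hfact : ((n - 2 * r).factorial : ℝ) * (n.descFactorial (2 * r) : ℝ) = (n.factorial : ℝ) := by
    exact_mod_cast congrArg Nat.cast (Nat.factorial_mul_descFactorial h2r)
  have hxpow : x ^ (n - 2 * r) * x ^ (2 * r) = x ^ n := by
    rw [← pow_add, Nat.sub_add_cancel h2r]
  have hnpow : ((n : ℝ) ^ 2) ^ r = (n : ℝ) ^ (2 * r) := by rw [← pow_mul]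
  simp only [hg, hz, div_pow, hnpow]
  rw [← hfact, ← hxpow]
  have hx2r : (x ^ 2) ^ r = x ^ (2 * r) := by rw [← pow_mul]
  rw [hx2r]
  field_simp
end
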